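/- (The truncated octahedron is space-filling) Let ℓ > 0. For every ξ ∈ ℝ³ there exists c ∈ L_ℓ such that |ξ_i − c_i| ≤ ℓ/2 for i = 1,2,3 and |ξ_1 − c_1| + |ξ_2 − c_2| + |ξ_3 − c_3| ≤ (3/4)·ℓ; that is, the closures of the cells T(c), c ∈ L_ℓ, cover ℝ³. -/

import Mathlib

noncomputable section

abbrev V3 := EuclideanSpace ℝ (Fin 3)

/-- The body-centered cubic lattice L_ℓ = {ℓn : n ∈ ℤ³} ∪ {ℓn + (ℓ/2,ℓ/2,ℓ/2) : n ∈ ℤ³}. -/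
def latt (ℓ : ℝ) : Set V3 :=
  {c | ∃ n : Fin 3 → ℤ, (∀ i, c i = ℓ * n i) ∨ (∀ i, c i = ℓ * n i + ℓ / 2)}

lemma fract_half_aux (x : ℝ) : |Int.fract x - 1/2| = 1/2 - |x - round x| := by
  rw [abs_sub_round_eq_min]
  rcases le_or_gt (Int.fract x) (1/2) with h | h
  · rw [min_eq_left (by linarith), abs_of_nonpos (by linarith)]; ring
  · rw [min_eq_right (by linarith), abs_of_pos (by linarith)]; ring

/-- **The truncated octahedron is space-filling:** every point of ℝ³ belongs to the
closure of a cell centered at a lattice point. -/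
theorem truncated_octahedron_space_filling
    (ℓ : ℝ) (hℓ : 0 < ℓ) (ξ : V3) :
    ∃ c ∈ latt ℓ, (∀ i, |ξ i - c i| ≤ ℓ / 2) ∧
      |ξ 0 - c 0| + |ξ 1 - c 1| + |ξ 2 - c 2| ≤ (3 / 4) * ℓ := by
  have hℓ' : ℓ ≠ 0 := ne_of_gt hℓ
  set y : Fin 3 → ℝ := fun i => ξ i / ℓ with hy
  have hξ : ∀ i, ξ i = ℓ * y i := fun i => by show ξ i = ℓ * (ξ i / ℓ); field_simp
  have e2 : ∀ i, ξ i - ℓ * round (y i) = ℓ * (y i - round (y i)) := fun i => by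
    rw [hξ i]; ring
  by_cases h : |ξ 0 - ℓ * round (y 0)| + |ξ 1 - ℓ * round (y 1)| + |ξ 2 - ℓ * round (y 2)| ≤ 3/4 * ℓ
  · refine ⟨WithLp.toLp 2 (fun i => ℓ * round (y i) : Fin 3 → ℝ), ⟨fun i => round (y i), Or.inl fun i => rfl⟩,
      ?_, by show |ξ 0 - ℓ * round (y 0)| + _ + _ ≤ _; linarith⟩
    intro i
    show |ξ i - ℓ * round (y i)| ≤ ℓ / 2
    rw [e2 i, abs_mul, abs_of_pos hℓ]
    nlinarith [abs_sub_round (y i)]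
  · push_neg at h
    have e1 : ∀ i, ξ i - (ℓ * ⌊y i⌋ + ℓ/2) = ℓ * (Int.fract (y i) - 1/2) := fun i => by
      rw [hξ i, Int.fract]; ring
    have key : ∀ i, |ξ i - (ℓ * ⌊y i⌋ + ℓ/2)| = ℓ/2 - |ξ i - ℓ * round (y i)| := by
      intro i
      rw [e1 i, e2 i, abs_mul, abs_mul, abs_of_pos hℓ, fract_half_aux]; ring
    refine ⟨WithLp.toLp 2 (fun i => ℓ * ⌊y i⌋ + ℓ/2 : Fin 3 → ℝ), ⟨fun i => ⌊y i⌋, Or.inr fun i => rfl⟩,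
      ?_, ?_⟩
    · intro i
      show |ξ i - (ℓ * ⌊y i⌋ + ℓ/2)| ≤ ℓ / 2
      rw [key i]
      have := abs_nonneg (ξ i - ℓ * round (y i))
      linarith
    · show |ξ 0 - (ℓ * ⌊y 0⌋ + ℓ/2)| + |ξ 1 - (ℓ * ⌊y 1⌋ + ℓ/2)| +
        |ξ 2 - (ℓ * ⌊y 2⌋ + ℓ/2)| ≤ 3/4 * ℓ
      rw [key 0, key 1, key 2]; linarith
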